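/- Let d ≥ 3 and h ∈ C¹_c(0, ∞). Then ∫₀^∞ (h'(r))² r^{d−1} dr ≥ ((d−2)/2)² ∫₀^∞ h(r)² r^{d−3} dr (Hardy's inequality in radial form). -/

import Mathlib

open MeasureTheory Set

theorem stmt_9 (d : ℕ) (hd : 3 ≤ d) (h : ℝ → ℝ)
    (hreg : ContDiff ℝ 1 h) (hsupp : HasCompactSupport h)
    (hsupp' : tsupport h ⊆ Ioi (0 : ℝ)) :
    (((d : ℝ) - 2) / 2) ^ 2 * ∫ r in Ioi (0 : ℝ), (h r) ^ 2 * r ^ ((d : ℝ) - 3)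
      ≤ ∫ r in Ioi (0 : ℝ), (deriv h r) ^ 2 * r ^ ((d : ℝ) - 1) := by
  rcases eq_or_ne h 0 with rfl | hne
  · have hz : deriv (0 : ℝ → ℝ) = fun _ => 0 := by
      funext x
      exact deriv_const x 0
    simp [hz]
  have hKne : (tsupport h).Nonempty := by
    rw [nonempty_iff_ne_empty]
    intro hK
    exact hne (tsupport_eq_empty_iff.mp hK)
  have hKc : IsCompact (tsupport h) := hsupp
  set a0 : ℝ := sInf (tsupport h) with ha0
  set b0 : ℝ := sSup (tsupport h) with hb0
  have ha0mem : a0 ∈ tsupport h := hKc.sInf_mem hKne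
  have hb0mem : b0 ∈ tsupport h := hKc.sSup_mem hKne
  have ha0pos : (0:ℝ) < a0 := hsupp' ha0mem
  have ha0b0 : a0 ≤ b0 := le_csSup hKc.bddAbove ha0mem
  set a : ℝ := a0 / 2 with ha
  set b : ℝ := b0 + 1 with hb
  have hapos : (0:ℝ) < a := by positivity
  have haa0 : a < a0 := by simp only [ha]; linarith
  have hb0b : b0 < b := by simp only [hb]; linarith
  have hab : a ≤ b := by linarith
  have hd2 : (1:ℝ) ≤ (d:ℝ) - 2 := by
    have : (3:ℝ) ≤ (d:ℝ) := by exact_mod_cast hd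
    linarith
  -- vanishing outside Ioc a b
  have hnK : ∀ x : ℝ, x ∉ Ioc a b → x ∉ tsupport h := by
    intro x hx hxK
    apply hx
    constructor
    · have := csInf_le hKc.bddBelow hxK
      linarith
    · have := le_csSup hKc.bddAbove hxK
      linarith
  have hzero : ∀ x : ℝ, x ∉ Ioc a b → h x = 0 :=
    fun x hx => image_eq_zero_of_notMem_tsupport (hnK x hx)
  have hzero' : ∀ x : ℝ, x ∉ Ioc a b → deriv h x = 0 := by
    intro x hx
    by_contra hne'
    exact hnK x hx (support_deriv_subset (Function.mem_support.mpr hne'))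
  have hha : h a = 0 := hzero a (by simp [lt_irrefl])
  have hhb : h b = 0 := by
    apply image_eq_zero_of_notMem_tsupport
    intro hbK
    have := le_csSup hKc.bddAbove hbK
    linarith
  -- abbreviations
  set c : ℝ := ((d:ℝ) - 2) / 2 with hc
  set F1 : ℝ → ℝ := fun r => (deriv h r) ^ 2 * r ^ ((d:ℝ) - 1) with hF1
  set F2 : ℝ → ℝ := fun r => (h r) ^ 2 * r ^ ((d:ℝ) - 3) with hF2
  set G : ℝ → ℝ := fun r => h r * deriv h r * r ^ ((d:ℝ) - 2) with hG
  -- reduce set integrals to interval integrals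
  have reduce : ∀ F : ℝ → ℝ, (∀ x, x ∉ Ioc a b → F x = 0) →
      ∫ r in Ioi (0:ℝ), F r = ∫ r in a..b, F r := by
    intro F hF
    rw [intervalIntegral.integral_of_le hab]
    rw [setIntegral_eq_integral_of_forall_compl_eq_zero (s := Ioi (0:ℝ)),
      setIntegral_eq_integral_of_forall_compl_eq_zero (s := Ioc a b) hF]
    intro x hx
    apply hF
    intro hx'
    exact hx (lt_trans hapos hx'.1)
  have red1 : ∫ r in Ioi (0:ℝ), F1 r = ∫ r in a..b, F1 r := by
    apply reduce
    intro x hx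
    simp [hF1, hzero' x hx]
  have red2 : ∫ r in Ioi (0:ℝ), F2 r = ∫ r in a..b, F2 r := by
    apply reduce
    intro x hx
    simp [hF2, hzero x hx]
  -- continuity facts
  have hcont : Continuous h := hreg.continuous
  have hcont' : Continuous (deriv h) := hreg.continuous_deriv le_rfl
  have hpow : ∀ p : ℝ, ContinuousOn (fun r : ℝ => r ^ p) (uIcc a b) := by
    intro p x hx
    rw [uIcc_of_le hab] at hx
    exact (Real.continuousAt_rpow_const x p
      (Or.inl (lt_of_lt_of_le hapos hx.1).ne')).continuousWithinAt
  have intF1 : IntervalIntegrable F1 volume a b := by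
    exact (((hcont'.continuousOn.pow 2)).mul (hpow _)).intervalIntegrable
  have intF2 : IntervalIntegrable F2 volume a b := by
    exact (((hcont.continuousOn.pow 2)).mul (hpow _)).intervalIntegrable
  have intG : IntervalIntegrable G volume a b := by
    exact (((hcont.continuousOn.mul hcont'.continuousOn)).mul (hpow _)).intervalIntegrable
  -- integration by parts : ∫ (2 G + (d-2) F2) = 0
  have hFTC : ∫ r in a..b, (2 * G r + ((d:ℝ) - 2) * F2 r) = 0 := by
    have hderiv : ∀ x ∈ uIcc a b,
        HasDerivAt (fun r => (h r) ^ 2 * r ^ ((d:ℝ) - 2))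
          (2 * G x + ((d:ℝ) - 2) * F2 x) x := by
      intro x hx
      rw [uIcc_of_le hab] at hx
      have hx0 : (0:ℝ) < x := lt_of_lt_of_le hapos hx.1
      have hh : HasDerivAt h (deriv h x) x :=
        ((hreg.differentiable one_ne_zero) x).hasDerivAt
      have h2 : HasDerivAt (fun y => h y ^ 2) (2 * h x * deriv h x) x := by
        simpa using hh.fun_pow 2
      have hr : HasDerivAt (fun y : ℝ => y ^ ((d:ℝ) - 2))
          (((d:ℝ) - 2) * x ^ ((d:ℝ) - 3)) x := by
        have := Real.hasDerivAt_rpow_const (x := x) (p := (d:ℝ) - 2) (Or.inl hx0.ne')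
        convert this using 2
        ring
      have := h2.fun_mul hr
      refine this.congr_deriv ?_
      simp only [hG, hF2]
      ring
    have hint : IntervalIntegrable (fun r => 2 * G r + ((d:ℝ) - 2) * F2 r) volume a b :=
      (intG.const_mul 2).add (intF2.const_mul _)
    rw [intervalIntegral.integral_eq_sub_of_hasDerivAt hderiv hint]
    simp [hha, hhb]
  have hIBP : ∫ r in a..b, G r = -c * ∫ r in a..b, F2 r := by
    rw [intervalIntegral.integral_add (intG.const_mul 2) (intF2.const_mul _),
      intervalIntegral.integral_const_mul, intervalIntegral.integral_const_mul] at hFTC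
    have h2ne : (2:ℝ) ≠ 0 := two_ne_zero
    field_simp [hc]
    rw [hc]
    linear_combination hFTC / 2
  -- nonnegativity of the square
  set Q : ℝ → ℝ := fun r => (deriv h r + c * h r / r) ^ 2 * r ^ ((d:ℝ) - 1) with hQ
  have hQnonneg : 0 ≤ ∫ r in a..b, Q r := by
    apply intervalIntegral.integral_nonneg hab
    intro u hu
    have hu0 : (0:ℝ) ≤ u := le_of_lt (lt_of_lt_of_le hapos hu.1)
    exact mul_nonneg (sq_nonneg _) (Real.rpow_nonneg hu0 _)
  -- expand the square
  have hexpand : ∫ r in a..b, Q r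
      = (∫ r in a..b, F1 r) + (2 * c) * (∫ r in a..b, G r)
        + c ^ 2 * (∫ r in a..b, F2 r) := by
    have hEq : EqOn Q (fun r => F1 r + (2 * c) * G r + c ^ 2 * F2 r) (uIcc a b) := by
      intro u hu
      rw [uIcc_of_le hab] at hu
      have hu0 : (0:ℝ) < u := lt_of_lt_of_le hapos hu.1
      have e1 : u ^ ((d:ℝ) - 1) = u ^ ((d:ℝ) - 2) * u := by
        rw [show (d:ℝ) - 1 = ((d:ℝ) - 2) + 1 by ring, Real.rpow_add_one hu0.ne']
      have e2 : u ^ ((d:ℝ) - 2) = u ^ ((d:ℝ) - 3) * u := by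
        rw [show (d:ℝ) - 2 = ((d:ℝ) - 3) + 1 by ring, Real.rpow_add_one hu0.ne']
      simp only [hQ, hF1, hF2, hG, e1, e2]
      field_simp
      ring
    rw [intervalIntegral.integral_congr hEq,
      intervalIntegral.integral_add ((intF1.add (intG.const_mul _))) (intF2.const_mul _),
      intervalIntegral.integral_add intF1 (intG.const_mul _),
      intervalIntegral.integral_const_mul, intervalIntegral.integral_const_mul]
  -- conclude
  rw [red1, red2]
  rw [hexpand, hIBP] at hQnonneg
  nlinarith [hQnonneg]
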